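/- Let p ∈ (1,2], m ∈ ℕ with m ≥ 1, and let D ≥ 0 be a constant such that for every N, n ∈ ℕ and every (m+1)-linear form A : ℝᴺ × ℝⁿ × ⋯ × ℝⁿ → ℝ (m copies of ℝⁿ) one has (∑_{i₂,…,i_{m+1}=1}^{n} (∑_{i₁=1}^{N} |A(e_{i₁},e_{i₂},…,e_{i_{m+1}})|^{p})^{2/p})^{1/2} ≤ D · sup{|A(x^{(1)},…,x^{(m+1)})| : ‖x^{(1)}‖_{ℓ_{p/(p−1)}} ≤ 1 and ‖x^{(k)}‖_{ℓ_∞} ≤ 1 for k = 2,…,m+1}. Then the multiple Khintchine inequality holds with constant D: for every n ∈ ℕ and every array of real scalars (y_{i₁…i_m})_{i₁,…,i_m=1}^{n}, (∑_{i₁,…,i_m=1}^{n} |y_{i₁…i_m}|²)^{1/2} ≤ D · (∫_{[0,1]^m} |∑_{i₁,…,i_m=1}^{n} r_{i₁}(t₁)···r_{i_m}(t_m) y_{i₁…i_m}|^{p} dt₁···dt_m)^{1/p}. -/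

import Mathlib

open MeasureTheory Real Filter

/-- The `j`-th Rademacher function, `r_j(t) = sgn(sin(2^j π t))`. -/
noncomputable def rademacher (j : ℕ) (t : ℝ) : ℝ :=
  Real.sign (Real.sin ((2 : ℝ) ^ j * Real.pi * t))

/-- `p₀ ∈ (1,2)` is the unique solution of `Γ((p₀+1)/2) = √π / 2`. -/
noncomputable def khintchineP0 : ℝ :=
  sInf {p : ℝ | 1 < p ∧ p < 2 ∧ Real.Gamma ((p + 1) / 2) = Real.sqrt Real.pi / 2}

/-- The optimal constant `A_r` in the Khintchine inequality. -/
noncomputable def khintchineA (r : ℝ) : ℝ :=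
  if r ≤ khintchineP0 then (2 : ℝ) ^ (1 / r - 1 / 2)
  else if r < 2 then
    (1 / Real.sqrt 2) * (Real.Gamma ((r + 1) / 2) / Real.sqrt Real.pi) ^ (-(1 / r))
  else 1

/-- The `ℓ_p` norm of a vector in `ℝⁿ` (for finite `p`). -/
noncomputable def lpNorm (p : ℝ) {n : ℕ} (x : Fin n → ℝ) : ℝ :=
  (∑ i, |x i| ^ p) ^ (1 / p)

/-- The `ℓ_∞` norm of a vector in `ℝⁿ`. -/
noncomputable def linfNorm {n : ℕ} (x : Fin n → ℝ) : ℝ :=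
  ⨆ i, |x i|

/-- The norm of an `(m+1)`-linear form on `ℝᴺ × (ℝⁿ)^m` (encoded as a linear map into
`m`-multilinear maps): `sup{|T(x, y₁, …, y_m)| : ‖x‖_{ℓ_p} ≤ 1, ‖y_k‖_{ℓ_∞} ≤ 1}`. -/
noncomputable def multiOpNorm (p : ℝ) {N n m : ℕ}
    (T : (Fin N → ℝ) →ₗ[ℝ] MultilinearMap ℝ (fun _ : Fin m => (Fin n → ℝ)) ℝ) : ℝ :=
  sSup {c : ℝ | ∃ (x : Fin N → ℝ) (y : Fin m → (Fin n → ℝ)),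
    lpNorm p x ≤ 1 ∧ (∀ k, linfNorm (y k) ≤ 1) ∧ c = |T x y|}

/-! ### Auxiliary lemmas -/

section Aux

lemma rademacher_eq_of_mem_Ioo (i j : ℕ) {t : ℝ}
    (ht : t ∈ Set.Ioo ((j:ℝ)/2^(i+1)) (((j:ℝ)+1)/2^(i+1))) :
    rademacher (i+1) t = (-1)^j := by
  have h2 : (0:ℝ) < 2^(i+1) := by positivity
  obtain ⟨h1, h2'⟩ := ht
  have hu1 : (j:ℝ) < 2^(i+1) * t := by
    rw [div_lt_iff₀ h2] at h1; linarith
  have hu2 : 2^(i+1) * t < (j:ℝ) + 1 := by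
    rw [lt_div_iff₀ h2] at h2'; linarith
  have harg : (2:ℝ)^(i+1) * Real.pi * t = Real.pi * (2^(i+1)*t - j) + j * Real.pi := by ring
  have hs : Real.sin ((2:ℝ)^(i+1) * Real.pi * t)
      = (-1)^j * Real.sin (Real.pi * (2^(i+1)*t - j)) := by
    rw [harg, Real.sin_add_nat_mul_pi]
  have hpos : 0 < Real.sin (Real.pi * (2^(i+1)*t - j)) := by
    apply Real.sin_pos_of_pos_of_lt_pi
    · have : (0:ℝ) < 2^(i+1)*t - j := by linarith
      positivity
    · nlinarith [Real.pi_pos]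
  rw [rademacher, hs]
  rcases Nat.even_or_odd j with hj | hj
  · rw [hj.neg_one_pow, one_mul, Real.sign_of_pos hpos]
  · rw [hj.neg_one_pow, neg_one_mul, Real.sign_of_neg (by linarith)]

/-- the constant value of `rademacher (i+1)` on the `ℓ`-th dyadic interval of level `n`. -/
noncomputable def sgnv (n : ℕ) (ℓ : Fin (2^n)) (i : Fin n) : ℝ :=
  if (ℓ:ℕ).testBit (n-1-i.1) then -1 else 1

lemma sgnv_abs (n : ℕ) (ℓ : Fin (2^n)) (i : Fin n) : |sgnv n ℓ i| = 1 := by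
  rw [sgnv]; split <;> simp

lemma rademacher_on_cube {n : ℕ} (i : Fin n) (ℓ : Fin (2^n)) {t : ℝ}
    (ht : t ∈ Set.Ioo (((ℓ:ℕ):ℝ)/2^n) ((((ℓ:ℕ):ℝ)+1)/2^n)) :
    rademacher (i.1+1) t = sgnv n ℓ i := by
  obtain ⟨h1, h2⟩ := ht
  set b : ℕ := n - 1 - i.1 with hb
  have hib : i.1 + 1 + b = n := by omega
  set q : ℕ := (ℓ:ℕ) / 2^b with hq
  have hql : q * 2^b ≤ (ℓ:ℕ) := Nat.div_mul_le_self _ _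
  have hqu : (ℓ:ℕ) < (q+1) * 2^b := by
    have := Nat.lt_div_mul_add (a := (ℓ:ℕ)) (b := 2^b) (Nat.two_pow_pos b)
    rw [add_mul, one_mul, hq]; omega
  have hpow : ((2:ℝ))^n = 2^(i.1+1) * 2^b := by
    rw [← pow_add, hib]
  have key : rademacher (i.1+1) t = (-1)^q := by
    apply rademacher_eq_of_mem_Ioo
    constructor
    · apply lt_of_le_of_lt _ h1
      rw [hpow]
      rw [div_le_div_iff₀ (by positivity) (by positivity)]
      have : ((q:ℝ)) * 2^b ≤ ((ℓ:ℕ):ℝ) := by exact_mod_cast hql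
      nlinarith [pow_pos (show (0:ℝ) < 2 by norm_num) (i.1+1), pow_pos (show (0:ℝ) < 2 by norm_num) b]
    · apply lt_of_lt_of_le h2
      rw [hpow, div_le_div_iff₀ (by positivity) (by positivity)]
      have : (((ℓ:ℕ)):ℝ) + 1 ≤ ((q:ℝ)+1) * 2^b := by exact_mod_cast hqu
      nlinarith [pow_pos (show (0:ℝ) < 2 by norm_num) (i.1+1), pow_pos (show (0:ℝ) < 2 by norm_num) b]
  rw [key, sgnv, Nat.testBit_eq_decide_div_mod_eq]
  rcases Nat.even_or_odd q with hq2 | hq2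
  · rw [hq2.neg_one_pow]
    have h3 : ¬ (q % 2 = 1) := by rw [Nat.even_iff] at hq2; omega
    rw [← hq]; simp [h3]
  · rw [hq2.neg_one_pow]
    have h3 : q % 2 = 1 := by rwa [Nat.odd_iff] at hq2
    rw [← hq]; simp [h3]

lemma measurable_realSign : Measurable Real.sign := by
  have h : Real.sign = fun r : ℝ => if r < 0 then (-1:ℝ) else if 0 < r then 1 else 0 := by
    funext r; rfl
  rw [h]
  exact Measurable.ite measurableSet_Iio measurable_const
    (Measurable.ite measurableSet_Ioi measurable_const measurable_const)

lemma measurable_rademacher (j : ℕ) : Measurable (rademacher j) := by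
  apply measurable_realSign.comp
  exact Real.measurable_sin.comp (measurable_id.const_mul _)

lemma abs_rademacher_le (j : ℕ) (t : ℝ) : |rademacher j t| ≤ 1 := by
  rw [rademacher]
  rcases Real.sign_apply_eq (Real.sin ((2:ℝ)^j * Real.pi * t)) with h | h | h <;>
    rw [h] <;> norm_num

noncomputable def Gz {m n : ℕ} (y : (Fin m → Fin n) → ℝ) (z : Fin m → Fin n → ℝ)
    (Q : Fin m → Fin (2^n)) : ℝ :=
  ∑ i, y i * (∏ k, sgnv n (Q k) (i k)) * ∏ k, z k (i k)

noncomputable def Phi (p : ℝ) {m n : ℕ} (y : (Fin m → Fin n) → ℝ)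
    (z : Fin m → Fin n → ℝ) : ℝ :=
  ∑ Q : Fin m → Fin (2^n), |Gz y z Q| ^ p

/-- bit-flip on `Fin (2^n)` at bit `n-1-i`. -/
def bflip {n : ℕ} (i : Fin n) (ℓ : Fin (2^n)) : Fin (2^n) :=
  ⟨(ℓ:ℕ) ^^^ 2^(n-1-i.1), Nat.xor_lt_two_pow ℓ.2 (Nat.pow_lt_pow_right (by norm_num) (by omega))⟩

lemma bflip_bflip {n : ℕ} (i : Fin n) (ℓ : Fin (2^n)) : bflip i (bflip i ℓ) = ℓ := by
  simp [bflip, Nat.xor_assoc]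

lemma sgnv_bflip {n : ℕ} (i i' : Fin n) (ℓ : Fin (2^n)) :
    sgnv n (bflip i ℓ) i' = (if i' = i then -1 else 1) * sgnv n ℓ i' := by
  rcases eq_or_ne i' i with rfl | hne
  · simp only [if_pos rfl, sgnv, bflip, Nat.testBit_xor, Nat.testBit_two_pow_self]
    split <;> simp_all
  · have hb : n - 1 - i.1 ≠ n - 1 - i'.1 := by
      have := i.2; have := i'.2
      intro hcon; apply hne; apply Fin.ext; omega
    simp only [if_neg hne, sgnv, bflip, Nat.testBit_xor, Nat.testBit_two_pow_of_ne hb]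
    split <;> simp_all

lemma Gz_flip {m n : ℕ} (y : (Fin m → Fin n) → ℝ) (z : Fin m → Fin n → ℝ)
    (k₀ : Fin m) (i₀ : Fin n) (Q : Fin m → Fin (2^n)) :
    Gz y (Function.update z k₀ (Function.update (z k₀) i₀ (-(z k₀ i₀)))) Q
      = Gz y z (Function.update Q k₀ (bflip i₀ (Q k₀))) := by
  unfold Gz
  apply Finset.sum_congr rfl
  intro i _
  have hprodz : ∏ k, (Function.update z k₀ (Function.update (z k₀) i₀ (-(z k₀ i₀)))) k (i k)
      = (if i k₀ = i₀ then -1 else 1) * ∏ k, z k (i k) := by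
    rw [← Finset.mul_prod_erase Finset.univ _ (Finset.mem_univ k₀),
        ← Finset.mul_prod_erase Finset.univ (fun k => z k (i k)) (Finset.mem_univ k₀)]
    have h1 : ∀ k ∈ Finset.univ.erase k₀,
        (Function.update z k₀ (Function.update (z k₀) i₀ (-(z k₀ i₀)))) k (i k) = z k (i k) := by
      intro k hk
      rw [Function.update_of_ne (Finset.ne_of_mem_erase hk)]
    rw [Finset.prod_congr rfl h1, Function.update_self, Function.update_apply]
    split
    · rename_i hcase; rw [hcase]; ring
    · ring
  have hprods : ∏ k, sgnv n ((Function.update Q k₀ (bflip i₀ (Q k₀))) k) (i k)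
      = (if i k₀ = i₀ then -1 else 1) * ∏ k, sgnv n (Q k) (i k) := by
    rw [← Finset.mul_prod_erase Finset.univ _ (Finset.mem_univ k₀),
        ← Finset.mul_prod_erase Finset.univ (fun k => sgnv n (Q k) (i k)) (Finset.mem_univ k₀)]
    have h1 : ∀ k ∈ Finset.univ.erase k₀,
        sgnv n ((Function.update Q k₀ (bflip i₀ (Q k₀))) k) (i k) = sgnv n (Q k) (i k) := by
      intro k hk
      rw [Function.update_of_ne (Finset.ne_of_mem_erase hk)]
    rw [Finset.prod_congr rfl h1, Function.update_self, sgnv_bflip]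
    ring
  rw [hprodz, hprods]
  split <;> ring

lemma Phi_flip {p : ℝ} {m n : ℕ} (y : (Fin m → Fin n) → ℝ) (z : Fin m → Fin n → ℝ)
    (k₀ : Fin m) (i₀ : Fin n) :
    Phi p y (Function.update z k₀ (Function.update (z k₀) i₀ (-(z k₀ i₀)))) = Phi p y z := by
  unfold Phi
  have hinv : Function.Involutive (fun Q : Fin m → Fin (2^n) =>
      Function.update Q k₀ (bflip i₀ (Q k₀))) := by
    intro Q
    simp [Function.update_idem, Function.update_self, bflip_bflip, Function.update_eq_self]
  calc ∑ Q : Fin m → Fin (2^n),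
        |Gz y (Function.update z k₀ (Function.update (z k₀) i₀ (-(z k₀ i₀)))) Q| ^ p
      = ∑ Q : Fin m → Fin (2^n), |Gz y z (Function.update Q k₀ (bflip i₀ (Q k₀)))| ^ p := by
        apply Finset.sum_congr rfl; intro Q _; rw [Gz_flip]
    _ = ∑ Q : Fin m → Fin (2^n), |Gz y z Q| ^ p :=
        Equiv.sum_comp (Function.Involutive.toPerm _ hinv) (fun Q => |Gz y z Q| ^ p)

/-- `Gz` is affine in each `z`-coordinate. -/
lemma Gz_affine {m n : ℕ} (y : (Fin m → Fin n) → ℝ) (z : Fin m → Fin n → ℝ)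
    (k₀ : Fin m) (i₀ : Fin n) (w : ℝ) (Q : Fin m → Fin (2^n)) :
    Gz y (Function.update z k₀ (Function.update (z k₀) i₀ w)) Q
      = ((1+w)/2) * Gz y (Function.update z k₀ (Function.update (z k₀) i₀ 1)) Q
        + ((1-w)/2) * Gz y (Function.update z k₀ (Function.update (z k₀) i₀ (-1))) Q := by
  unfold Gz
  rw [Finset.mul_sum, Finset.mul_sum, ← Finset.sum_add_distrib]
  apply Finset.sum_congr rfl
  intro i _
  have key : ∀ v : ℝ, ∏ k, (Function.update z k₀ (Function.update (z k₀) i₀ v)) k (i k)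
      = (if i k₀ = i₀ then v else z k₀ (i k₀)) * ∏ k ∈ Finset.univ.erase k₀, z k (i k) := by
    intro v
    rw [← Finset.mul_prod_erase Finset.univ _ (Finset.mem_univ k₀)]
    have h1 : ∀ k ∈ Finset.univ.erase k₀,
        (Function.update z k₀ (Function.update (z k₀) i₀ v)) k (i k) = z k (i k) := by
      intro k hk; rw [Function.update_of_ne (Finset.ne_of_mem_erase hk)]
    rw [Finset.prod_congr rfl h1, Function.update_self, Function.update_apply]
  rw [key w, key 1, key (-1)]
  split <;> ring

lemma abs_rpow_convex {p : ℝ} (hp : 1 ≤ p) {a b θ : ℝ} (hθ : 0 ≤ θ) (hθ' : θ ≤ 1) :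
    |θ*a + (1-θ)*b| ^ p ≤ θ * |a| ^ p + (1-θ) * |b| ^ p := by
  have h1 : |θ*a + (1-θ)*b| ≤ θ*|a| + (1-θ)*|b| := by
    calc |θ*a + (1-θ)*b| ≤ |θ*a| + |(1-θ)*b| := abs_add_le _ _
    _ = θ*|a| + (1-θ)*|b| := by
        rw [abs_mul, abs_mul, abs_of_nonneg hθ, abs_of_nonneg (show (0:ℝ) ≤ 1-θ by linarith)]
  calc |θ*a + (1-θ)*b| ^ p ≤ (θ*|a| + (1-θ)*|b|) ^ p := by
        apply Real.rpow_le_rpow (abs_nonneg _) h1 (by linarith)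
    _ ≤ θ * |a| ^ p + (1-θ) * |b| ^ p := by
        have := (convexOn_rpow hp).2 (Set.mem_Ici.2 (abs_nonneg a)) (Set.mem_Ici.2 (abs_nonneg b))
          hθ (by linarith : (0:ℝ) ≤ 1 - θ) (by ring)
        simpa [smul_eq_mul] using this

lemma Phi_box {p : ℝ} (hp : 1 ≤ p) {m n : ℕ} (y : (Fin m → Fin n) → ℝ)
    (z : Fin m → Fin n → ℝ) (hz : ∀ k i, |z k i| ≤ 1) :
    Phi p y z ≤ Phi p y (fun _ _ => 1) := by
  suffices H : ∀ s : Finset (Fin m × Fin n), ∀ z : Fin m → Fin n → ℝ,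
      (∀ k i, |z k i| ≤ 1) → (∀ ki : Fin m × Fin n, ki ∉ s → z ki.1 ki.2 = 1) →
      Phi p y z ≤ Phi p y (fun _ _ => 1) by
    exact H Finset.univ z hz (fun ki hki => absurd (Finset.mem_univ ki) hki)
  intro s
  induction s using Finset.induction_on with
  | empty =>
    intro z hz1 hz2
    have : z = fun _ _ => 1 := by
      funext k i; exact hz2 (k, i) (Finset.notMem_empty _)
    rw [this]
  | insert a s' hnotmem ih =>
    intro z hz1 hz2
    obtain ⟨k₀, i₀⟩ := a
    set w := z k₀ i₀ with hw
    set θ := (1+w)/2 with hθdef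
    have hw1 : |w| ≤ 1 := hz1 k₀ i₀
    have hθ : 0 ≤ θ := by rw [hθdef]; rw [abs_le] at hw1; linarith
    have hθ1 : θ ≤ 1 := by rw [hθdef]; rw [abs_le] at hw1; linarith
    set z1 := Function.update z k₀ (Function.update (z k₀) i₀ 1) with hz1def
    set z2 := Function.update z k₀ (Function.update (z k₀) i₀ (-1)) with hz2def
    have hzeq : z = Function.update z k₀ (Function.update (z k₀) i₀ w) := by
      rw [hw, Function.update_eq_self, Function.update_eq_self]
    have step1 : Phi p y z ≤ θ * Phi p y z1 + (1-θ) * Phi p y z2 := by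
      conv_lhs => rw [hzeq]
      unfold Phi
      rw [Finset.mul_sum, Finset.mul_sum, ← Finset.sum_add_distrib]
      apply Finset.sum_le_sum
      intro Q _
      rw [Gz_affine y z k₀ i₀ w Q]
      have := abs_rpow_convex hp (a := Gz y z1 Q) (b := Gz y z2 Q) hθ hθ1
      have hθw : θ = (1+w)/2 := hθdef
      have h1θ : 1 - θ = (1-w)/2 := by rw [hθdef]; ring
      rw [← hθw, ← h1θ] at *
      exact this
    have step2 : Phi p y z2 = Phi p y z1 := by
      have : z2 = Function.update z1 k₀ (Function.update (z1 k₀) i₀ (-(z1 k₀ i₀))) := by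
        rw [hz1def, hz2def]
        rw [Function.update_idem]
        congr 1
        rw [Function.update_self, Function.update_idem, Function.update_self]
      rw [this, Phi_flip]
    have step3 : Phi p y z1 ≤ Phi p y (fun _ _ => 1) := by
      apply ih z1
      · intro k i
        rw [hz1def, Function.update_apply]
        split
        · rw [Function.update_apply]; split
          · norm_num
          · exact hz1 k₀ i
        · exact hz1 k i
      · intro ki hki
        rcases eq_or_ne ki (k₀, i₀) with rfl | hne
        · simp [hz1def]
        · have : ki ∉ insert (k₀, i₀) s' := by
            simp only [Finset.mem_insert]; push_neg; exact ⟨hne, hki⟩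
          have hval := hz2 ki this
          rw [hz1def, Function.update_apply]
          split
          · rename_i hk
            rw [Function.update_apply]
            split
            · rfl
            · rename_i hi
              rw [← hval]
              congr 1
              exact hk.symm
          · exact hval
    calc Phi p y z ≤ θ * Phi p y z1 + (1-θ) * Phi p y z2 := step1
      _ = Phi p y z1 := by rw [step2]; ring
      _ ≤ Phi p y (fun _ _ => 1) := step3

/-! ### The dyadic cubes and the step-function integral -/

def cube {m : ℕ} (n : ℕ) (Q : Fin m → Fin (2^n)) : Set (Fin m → ℝ) :=
  Set.univ.pi fun k => Set.Ioo (((Q k : ℕ) : ℝ) / 2^n) ((((Q k : ℕ) : ℝ) + 1) / 2^n)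

lemma cube_measurableSet {m n : ℕ} (Q : Fin m → Fin (2^n)) : MeasurableSet (cube n Q) :=
  MeasurableSet.univ_pi fun _ => measurableSet_Ioo

lemma cube_volume {m n : ℕ} (Q : Fin m → Fin (2^n)) :
    volume (cube n Q) = ENNReal.ofReal ((((2:ℝ)^n) ^ m)⁻¹) := by
  rw [cube, volume_pi_pi]
  have hv : ∀ k : Fin m, volume (Set.Ioo (((Q k : ℕ):ℝ)/2^n) ((((Q k : ℕ):ℝ)+1)/2^n))
      = ENNReal.ofReal (((2:ℝ)^n)⁻¹) := by
    intro k
    rw [Real.volume_Ioo]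
    congr 1
    field_simp
    ring
  simp_rw [hv]
  rw [Finset.prod_const, Finset.card_univ, Fintype.card_fin,
    ← ENNReal.ofReal_pow (by positivity), inv_pow]

lemma cube_subset_Icc {m n : ℕ} (Q : Fin m → Fin (2^n)) :
    cube n Q ⊆ Set.Icc (0 : Fin m → ℝ) 1 := by
  rw [← Set.pi_univ_Icc]
  apply Set.pi_mono
  intro k _
  intro x hx
  obtain ⟨h1, h2⟩ := hx
  have hQ : ((Q k : ℕ) : ℝ) + 1 ≤ 2^n := by
    have := (Q k).2
    exact_mod_cast Nat.succ_le_of_lt this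
  have h2n : (0:ℝ) < 2^n := by positivity
  constructor
  · simp only [Pi.zero_apply]
    have : (0:ℝ) ≤ ((Q k : ℕ):ℝ)/2^n := by positivity
    linarith
  · simp only [Pi.one_apply]
    have : (((Q k : ℕ):ℝ)+1)/2^n ≤ 1 := by
      rw [div_le_one h2n]; exact hQ
    linarith

lemma cube_disjoint {m n : ℕ} : Pairwise (Function.onFun Disjoint (cube (m := m) n)) := by
  intro Q Q' hne
  rw [Function.onFun, Set.disjoint_left]
  intro t htQ htQ'
  obtain ⟨k, hk⟩ := Function.ne_iff.1 hne
  have h1 := htQ k (Set.mem_univ k)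
  have h2 := htQ' k (Set.mem_univ k)
  obtain ⟨h1a, h1b⟩ := h1
  obtain ⟨h2a, h2b⟩ := h2
  have h2n : (0:ℝ) < 2^n := by positivity
  rcases lt_or_gt_of_ne (fun hcon => hk (Fin.ext hcon) : (Q k : ℕ) ≠ (Q' k : ℕ)) with hlt | hlt
  · have : ((Q k : ℕ):ℝ) + 1 ≤ ((Q' k : ℕ):ℝ) := by exact_mod_cast hlt
    have : (((Q k : ℕ):ℝ)+1)/2^n ≤ ((Q' k : ℕ):ℝ)/2^n := by gcongr
    linarith
  · have : ((Q' k : ℕ):ℝ) + 1 ≤ ((Q k : ℕ):ℝ) := by exact_mod_cast hlt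
    have : (((Q' k : ℕ):ℝ)+1)/2^n ≤ ((Q k : ℕ):ℝ)/2^n := by gcongr
    linarith

lemma Icc_ae_eq_iUnion_cube {m n : ℕ} :
    (Set.Icc (0 : Fin m → ℝ) 1 : Set (Fin m → ℝ)) =ᵐ[volume] ⋃ Q : Fin m → Fin (2^n), cube n Q := by
  have hU : (⋃ Q : Fin m → Fin (2^n), cube n Q) ⊆ Set.Icc (0 : Fin m → ℝ) 1 :=
    Set.iUnion_subset cube_subset_Icc
  rw [Filter.eventuallyEq_set]
  set bad : Set (Fin m → ℝ) :=
    ⋃ (k : Fin m), ⋃ (r : Fin (2^n+1)), {t : Fin m → ℝ | t k = ((r:ℕ):ℝ)/2^n} with hbad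
  have hbadnull : volume bad = 0 := by
    apply measure_iUnion_null; intro k
    apply measure_iUnion_null; intro r
    have hset : {t : Fin m → ℝ | t k = ((r:ℕ):ℝ)/2^n}
        = Set.univ.pi (fun k' => if k' = k then {((r:ℕ):ℝ)/2^n} else Set.univ) := by
      ext t
      constructor
      · intro ht k' _
        by_cases hkk : k' = k
        · subst hkk; simp only [if_pos rfl]; exact ht
        · simp [hkk]
      · intro ht
        have := ht k (Set.mem_univ k)
        simpa using this
    rw [hset, volume_pi_pi]
    apply Finset.prod_eq_zero (Finset.mem_univ k)
    simp
  have hsub : Set.Icc (0 : Fin m → ℝ) 1 \ (⋃ Q : Fin m → Fin (2^n), cube n Q) ⊆ bad := by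
    intro t ⟨htI, htU⟩
    by_contra htb
    apply htU
    have hne : ∀ (k : Fin m) (r : ℕ), r ≤ 2^n → t k ≠ (r:ℝ)/2^n := by
      intro k r hr hcon
      apply htb
      rw [hbad]
      refine Set.mem_iUnion.2 ⟨k, Set.mem_iUnion.2 ⟨⟨r, by omega⟩, hcon⟩⟩
    rw [Set.mem_Icc] at htI
    have hchoice : ∀ k : Fin m, ∃ j : Fin (2^n),
        t k ∈ Set.Ioo (((j:ℕ):ℝ)/2^n) ((((j:ℕ):ℝ)+1)/2^n) := by
      intro k
      have h0 : (0:ℝ) ≤ t k := htI.1 k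
      have h1 : t k ≤ 1 := htI.2 k
      have h2n : (0:ℝ) < 2^n := by positivity
      have ht0 : 0 < t k := by
        rcases h0.lt_or_eq with h | h
        · exact h
        · exact absurd ((by rw [← h]; norm_num) : t k = ((0:ℕ):ℝ)/2^n) (hne k 0 (by positivity))
      have ht1 : t k < 1 := by
        rcases h1.lt_or_eq with h | h
        · exact h
        · exfalso
          exact hne k (2^n) le_rfl (by rw [h]; push_cast; field_simp)
      set u := t k * 2^n with hu
      have hu0 : 0 ≤ u := by positivity
      set j := Nat.floor u with hj
      have hj1 : (j:ℝ) ≤ u := Nat.floor_le hu0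
      have hj2 : u < j+1 := Nat.lt_floor_add_one u
      have hjlt : j < 2^n := by
        rw [hj, Nat.floor_lt hu0]
        push_cast
        calc u = t k * 2^n := hu
          _ < 1 * 2^n := by nlinarith
          _ = 2^n := by ring
      have hneq : (j:ℝ) ≠ u := by
        intro hcon
        apply hne k j (le_of_lt hjlt)
        rw [eq_div_iff (ne_of_gt h2n)]
        rw [hcon, hu]
      refine ⟨⟨j, hjlt⟩, ?_, ?_⟩
      · show ((j:ℕ):ℝ)/2^n < t k
        rw [div_lt_iff₀ h2n]
        exact lt_of_le_of_ne hj1 hneq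
      · show t k < (((j:ℕ):ℝ)+1)/2^n
        rw [lt_div_iff₀ h2n]
        exact hj2
    choose Q hQ using hchoice
    exact Set.mem_iUnion.2 ⟨Q, fun k _ => hQ k⟩
  filter_upwards [measure_eq_zero_iff_ae_notMem.1 hbadnull] with t ht
  constructor
  · intro htI
    by_cases htU : t ∈ ⋃ Q : Fin m → Fin (2^n), cube n Q
    · exact htU
    · exact absurd (hsub ⟨htI, htU⟩) ht
  · intro htU
    exact hU htU

lemma integral_step {m n : ℕ} (f : (Fin m → ℝ) → ℝ) (hf : Measurable f) (C : ℝ)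
    (hbd : ∀ t, |f t| ≤ C) (g : (Fin m → Fin (2^n)) → ℝ)
    (hg : ∀ Q, ∀ t ∈ cube n Q, f t = g Q) :
    ∫ t in Set.Icc (0 : Fin m → ℝ) 1, f t = (((2:ℝ)^n)^m)⁻¹ * ∑ Q, g Q := by
  have hIccvol : volume (Set.Icc (0 : Fin m → ℝ) 1) = 1 := by
    rw [← Set.pi_univ_Icc, volume_pi_pi]
    simp [Real.volume_Icc]
  haveI : IsFiniteMeasure (volume.restrict (Set.Icc (0 : Fin m → ℝ) 1)) := by
    constructor
    rw [Measure.restrict_apply_univ, hIccvol]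
    exact ENNReal.one_lt_top
  have hInt : IntegrableOn f (Set.Icc (0 : Fin m → ℝ) 1) volume := by
    apply Integrable.mono' (integrable_const C) hf.aestronglyMeasurable.restrict
    exact ae_of_all _ fun t => by simpa using hbd t
  have hUsub : (⋃ Q : Fin m → Fin (2^n), cube n Q) ⊆ Set.Icc (0 : Fin m → ℝ) 1 :=
    Set.iUnion_subset cube_subset_Icc
  rw [setIntegral_congr_set (Icc_ae_eq_iUnion_cube (n := n))]
  rw [integral_iUnion (fun Q => cube_measurableSet Q) cube_disjoint (hInt.mono_set hUsub)]
  rw [tsum_fintype]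
  rw [Finset.mul_sum]
  apply Finset.sum_congr rfl
  intro Q _
  rw [setIntegral_congr_fun (cube_measurableSet Q) (fun t ht => hg Q t ht)]
  rw [setIntegral_const, measureReal_def, cube_volume, ENNReal.toReal_ofReal (by positivity)]
  rw [smul_eq_mul]

/-! ### The multilinear form -/

noncomputable def radMulti {m n : ℕ} (i : Fin m → Fin n) :
    MultilinearMap ℝ (fun _ : Fin m => (Fin n → ℝ)) ℝ :=
  (MultilinearMap.mkPiAlgebra ℝ (Fin m) ℝ).compLinearMap fun k => LinearMap.proj (i k)

noncomputable def bigA (p : ℝ) (m n : ℕ) (y : (Fin m → Fin n) → ℝ) :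
    (Fin (Fintype.card (Fin m → Fin (2^n))) → ℝ) →ₗ[ℝ]
      MultilinearMap ℝ (fun _ : Fin m => (Fin n → ℝ)) ℝ :=
  ∑ Q : Fin m → Fin (2^n),
    (LinearMap.proj (Fintype.equivFin (Fin m → Fin (2^n)) Q)).smulRight
      (((((2:ℝ)^n)^m)⁻¹ ^ ((1:ℝ)/p)) •
        ∑ i, (y i * ∏ k, sgnv n (Q k) (i k)) • radMulti i)

lemma radMulti_apply {m n : ℕ} (i : Fin m → Fin n) (z : Fin m → (Fin n → ℝ)) :
    radMulti i z = ∏ k, z k (i k) := by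
  simp [radMulti]

lemma bigA_apply (p : ℝ) (m n : ℕ) (y : (Fin m → Fin n) → ℝ)
    (x : Fin (Fintype.card (Fin m → Fin (2^n))) → ℝ) (z : Fin m → (Fin n → ℝ)) :
    bigA p m n y x z = ∑ Q : Fin m → Fin (2^n),
      x (Fintype.equivFin (Fin m → Fin (2^n)) Q)
        * ((((2:ℝ)^n)^m)⁻¹ ^ ((1:ℝ)/p) * Gz y z Q) := by
  rw [bigA, LinearMap.sum_apply, MultilinearMap.sum_apply]
  apply Finset.sum_congr rfl
  intro Q _
  rw [LinearMap.smulRight_apply, LinearMap.proj_apply, MultilinearMap.smul_apply,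
    MultilinearMap.smul_apply, MultilinearMap.sum_apply]
  simp only [MultilinearMap.smul_apply, radMulti_apply, smul_eq_mul]
  rw [Gz]

lemma bigA_basis (p : ℝ) (m n : ℕ) (y : (Fin m → Fin n) → ℝ)
    (i₁ : Fin (Fintype.card (Fin m → Fin (2^n)))) (i : Fin m → Fin n) :
    bigA p m n y (Pi.single i₁ 1) (fun k => Pi.single (i k) 1)
      = (((2:ℝ)^n)^m)⁻¹ ^ ((1:ℝ)/p)
        * (y i * ∏ k, sgnv n (((Fintype.equivFin (Fin m → Fin (2^n))).symm i₁) k) (i k)) := by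
  rw [bigA_apply]
  rw [Finset.sum_eq_single ((Fintype.equivFin (Fin m → Fin (2^n))).symm i₁)]
  · rw [Equiv.apply_symm_apply, Pi.single_eq_same, one_mul]
    congr 1
    rw [Gz, Finset.sum_eq_single i]
    · have : ∀ k : Fin m, Pi.single (M := fun _ : Fin n => ℝ) (i k) 1 (i k) = 1 := fun k => by simp
      rw [Finset.prod_congr rfl (fun k _ => this k), Finset.prod_const_one, mul_one]
    · intro i' _ hne
      obtain ⟨k₀, hk₀⟩ := Function.ne_iff.1 hne
      have : Pi.single (M := fun _ : Fin n => ℝ) (i k₀) 1 (i' k₀) = 0 := by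
        simp [Pi.single_eq_of_ne hk₀]
      rw [show (∏ k, Pi.single (M := fun _ : Fin n => ℝ) (i k) 1 (i' k)) = 0 from
        Finset.prod_eq_zero (Finset.mem_univ k₀) this, mul_zero]
    · intro hni; exact absurd (Finset.mem_univ i) hni
  · intro Q _ hne
    have : (Fintype.equivFin (Fin m → Fin (2^n))) Q ≠ i₁ := by
      intro hcon; apply hne
      rw [← hcon, Equiv.symm_apply_apply]
    rw [Pi.single_eq_of_ne this, zero_mul]
  · intro hni; exact absurd (Finset.mem_univ _) hni

end Aux

set_option maxHeartbeats 2000000 in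
/-- Theorem `multibom` implies the multiple Khintchine inequality (case `1 < p ≤ 2`),
with the same constant. -/
theorem multilinear_mixed_littlewood_implies_multiple_khintchine
    (p : ℝ) (hp1 : 1 < p) (hp2 : p ≤ 2) (m : ℕ) (hm : 1 ≤ m) (D : ℝ) (hD : 0 ≤ D)
    (h : ∀ (N n : ℕ)
        (A : (Fin N → ℝ) →ₗ[ℝ] MultilinearMap ℝ (fun _ : Fin m => (Fin n → ℝ)) ℝ),
      (∑ i : Fin m → Fin n, (∑ i₁ : Fin N,
          |A (Pi.single i₁ 1) (fun k => Pi.single (i k) 1)| ^ p) ^ ((2 : ℝ) / p))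
            ^ ((1 : ℝ) / 2)
        ≤ D * multiOpNorm (p / (p - 1)) A) :
    ∀ (n : ℕ) (y : (Fin m → Fin n) → ℝ),
      (∑ i : Fin m → Fin n, |y i| ^ (2 : ℝ)) ^ ((1 : ℝ) / 2)
        ≤ D * (∫ t : Fin m → ℝ in Set.Icc 0 1,
            |∑ i : Fin m → Fin n,
              (∏ k, rademacher ((i k).1 + 1) (t k)) * y i| ^ p) ^ (1 / p) := by
  intro n y
  classical
  have hp0 : (0:ℝ) < p := by linarith
  have hcpos : (0:ℝ) < (((2:ℝ)^n)^m)⁻¹ := by positivity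
  set c : ℝ := (((2:ℝ)^n)^m)⁻¹ with hc
  set μ : ℝ := c ^ ((1:ℝ)/p) with hμdef
  have hμpos : 0 < μ := Real.rpow_pos_of_pos hcpos _
  have hμp : μ ^ p = c := by
    rw [hμdef, ← Real.rpow_mul hcpos.le, one_div_mul_cancel (ne_of_gt hp0), Real.rpow_one]
  have hcard : ((Fintype.card (Fin m → Fin (2^n)) : ℕ) : ℝ) = ((2:ℝ)^n)^m := by
    rw [Fintype.card_fun, Fintype.card_fin, Fintype.card_fin]
    push_cast
    ring
  have habs : ∀ (Q : Fin m → Fin (2^n)) (i : Fin m → Fin n),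
      |∏ k, sgnv n (Q k) (i k)| = 1 := by
    intro Q i
    rw [Finset.abs_prod, Finset.prod_congr rfl (fun k _ => sgnv_abs n (Q k) (i k)),
      Finset.prod_const_one]
  have h' := h (Fintype.card (Fin m → Fin (2^n))) n (bigA p m n y)
  -- Step 1: identify the left-hand side of `h'`.
  have hLHS : (∑ i : Fin m → Fin n, (∑ i₁ : Fin (Fintype.card (Fin m → Fin (2^n))),
      |bigA p m n y (Pi.single i₁ 1) (fun k => Pi.single (i k) 1)| ^ p) ^ ((2:ℝ)/p))
      = ∑ i : Fin m → Fin n, |y i| ^ (2:ℝ) := by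
    apply Finset.sum_congr rfl
    intro i _
    have hin : ∀ i₁, |bigA p m n y (Pi.single i₁ 1) (fun k => Pi.single (i k) 1)| ^ p
        = c * |y i| ^ p := by
      intro i₁
      rw [bigA_basis, abs_mul, abs_mul, habs, mul_one]
      rw [show |(((2:ℝ)^n)^m)⁻¹ ^ ((1:ℝ)/p)| = μ from by rw [hμdef, hc]; exact abs_of_pos hμpos]
      rw [Real.mul_rpow hμpos.le (abs_nonneg _), hμp]
    rw [Finset.sum_congr rfl (fun i₁ _ => hin i₁), Finset.sum_const, Finset.card_univ,
      Fintype.card_fin, nsmul_eq_mul, hcard, hc, ← mul_assoc,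
      mul_inv_cancel₀ (by positivity), one_mul, ← Real.rpow_mul (abs_nonneg _)]
    congr 1
    field_simp
  rw [hLHS] at h'
  -- Step 2: the integral identity.
  have hC0 : ∀ t : Fin m → ℝ,
      |∑ i : Fin m → Fin n, (∏ k, rademacher ((i k).1 + 1) (t k)) * y i| ≤ ∑ i, |y i| := by
    intro t
    refine (Finset.abs_sum_le_sum_abs _ _).trans ?_
    apply Finset.sum_le_sum
    intro i _
    rw [abs_mul]
    have hprod : |∏ k, rademacher ((i k).1 + 1) (t k)| ≤ 1 := by
      rw [Finset.abs_prod]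
      apply Finset.prod_le_one (fun k _ => abs_nonneg _) (fun k _ => abs_rademacher_le _ _)
    calc |∏ k, rademacher ((i k).1 + 1) (t k)| * |y i| ≤ 1 * |y i| :=
          mul_le_mul_of_nonneg_right hprod (abs_nonneg _)
      _ = |y i| := one_mul _
  have hFmeas : Measurable (fun t : Fin m → ℝ =>
      ∑ i : Fin m → Fin n, (∏ k, rademacher ((i k).1 + 1) (t k)) * y i) := by
    apply Finset.measurable_sum
    intro i _
    apply Measurable.mul_const
    apply Finset.measurable_prod
    intro k _
    exact (measurable_rademacher _).comp (measurable_pi_apply k)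
  have hint : ∫ t in Set.Icc (0 : Fin m → ℝ) 1,
      |∑ i : Fin m → Fin n, (∏ k, rademacher ((i k).1 + 1) (t k)) * y i| ^ p
      = c * Phi p y (fun _ _ => (1:ℝ)) := by
    rw [hc, Phi]
    apply integral_step _ ?_ ((∑ i, |y i|) ^ p) ?_ (fun Q => |Gz y (fun _ _ => 1) Q| ^ p)
    · -- step values
      intro Q t ht
      have hsum : ∑ i : Fin m → Fin n, (∏ k, rademacher ((i k).1 + 1) (t k)) * y i
          = Gz y (fun _ _ => 1) Q := by
        rw [Gz]
        apply Finset.sum_congr rfl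
        intro i _
        have hk : ∀ k, rademacher ((i k).1 + 1) (t k) = sgnv n (Q k) (i k) :=
          fun k => rademacher_on_cube (i k) (Q k) (ht k (Set.mem_univ k))
        rw [Finset.prod_congr rfl (fun k _ => hk k), Finset.prod_const_one, mul_one, mul_comm]
      rw [hsum]
    · -- measurability
      have := hFmeas
      fun_prop
    · -- boundedness
      intro t
      rw [abs_of_nonneg (Real.rpow_nonneg (abs_nonneg _) _)]
      exact Real.rpow_le_rpow (abs_nonneg _) (hC0 t) hp0.le
  -- Step 3: bound the operator norm.
  have hPhinn : 0 ≤ Phi p y (fun _ _ => (1:ℝ)) :=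
    Finset.sum_nonneg fun Q _ => Real.rpow_nonneg (abs_nonneg _) _
  have hop : multiOpNorm (p/(p-1)) (bigA p m n y)
      ≤ (c * Phi p y (fun _ _ => (1:ℝ))) ^ ((1:ℝ)/p) := by
    apply Real.sSup_le
    · rintro c' ⟨x, z, hx, hz, rfl⟩
      have hpq : (p/(p-1)).HolderConjugate p := (Real.HolderConjugate.conjExponent hp1).symm
      have hzb : ∀ (k : Fin m) (i : Fin n), |z k i| ≤ 1 := by
        intro k i
        refine le_trans ?_ (hz k)
        rw [linfNorm]
        exact le_ciSup (f := fun i => |z k i|) (Set.Finite.bddAbove (Set.finite_range _)) i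
      rw [bigA_apply]
      calc |∑ Q : Fin m → Fin (2^n), x (Fintype.equivFin (Fin m → Fin (2^n)) Q)
              * ((((2:ℝ)^n)^m)⁻¹ ^ ((1:ℝ)/p) * Gz y z Q)|
          ≤ ∑ Q : Fin m → Fin (2^n),
              |x (Fintype.equivFin (Fin m → Fin (2^n)) Q)| * (μ * |Gz y z Q|) := by
            refine (Finset.abs_sum_le_sum_abs _ _).trans ?_
            apply Finset.sum_le_sum
            intro Q _
            rw [abs_mul, abs_mul]
            rw [show |(((2:ℝ)^n)^m)⁻¹ ^ ((1:ℝ)/p)| = μ from by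
              rw [hμdef, hc]; exact abs_of_pos hμpos]
        _ ≤ (∑ Q : Fin m → Fin (2^n),
                |x (Fintype.equivFin (Fin m → Fin (2^n)) Q)| ^ (p/(p-1))) ^ (1/(p/(p-1)))
              * (∑ Q : Fin m → Fin (2^n), (μ * |Gz y z Q|) ^ p) ^ (1/p) :=
            Real.inner_le_Lp_mul_Lq_of_nonneg _ hpq (fun _ _ => abs_nonneg _)
              (fun _ _ => mul_nonneg hμpos.le (abs_nonneg _))
        _ ≤ 1 * (c * Phi p y (fun _ _ => (1:ℝ))) ^ ((1:ℝ)/p) := by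
            apply mul_le_mul ?_ ?_
              (Real.rpow_nonneg (Finset.sum_nonneg fun Q _ => Real.rpow_nonneg
                (mul_nonneg hμpos.le (abs_nonneg _)) p) _) zero_le_one
            · have hre : ∑ Q : Fin m → Fin (2^n),
                  |x (Fintype.equivFin (Fin m → Fin (2^n)) Q)| ^ (p/(p-1))
                  = ∑ i₁, |x i₁| ^ (p/(p-1)) :=
                Equiv.sum_comp (Fintype.equivFin (Fin m → Fin (2^n)))
                  (fun i₁ => |x i₁| ^ (p/(p-1)))
              rw [hre]
              exact hx
            · have h1 : ∑ Q : Fin m → Fin (2^n), (μ * |Gz y z Q|) ^ p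
                  = c * Phi p y z := by
                rw [Phi, Finset.mul_sum]
                apply Finset.sum_congr rfl
                intro Q _
                rw [Real.mul_rpow hμpos.le (abs_nonneg _), hμp]
              have h2 : Phi p y z ≤ Phi p y (fun _ _ => (1:ℝ)) := Phi_box hp1.le y z hzb
              have hPhiz : 0 ≤ Phi p y z :=
                Finset.sum_nonneg fun Q _ => Real.rpow_nonneg (abs_nonneg _) _
              rw [h1]
              apply Real.rpow_le_rpow (mul_nonneg hcpos.le hPhiz)
                (mul_le_mul_of_nonneg_left h2 hcpos.le) (div_nonneg zero_le_one hp0.le)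
        _ = (c * Phi p y (fun _ _ => (1:ℝ))) ^ ((1:ℝ)/p) := one_mul _
    · exact Real.rpow_nonneg (mul_nonneg hcpos.le hPhinn) _
  refine h'.trans ?_
  apply mul_le_mul_of_nonneg_left ?_ hD
  refine hop.trans ?_
  exact le_of_eq (by rw [hint])
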